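/- Let G be a graph with a clique modulator R of size r. Then the Grundy number of G can be computed by an algorithm examining a subgraph on at most r + r·2^r vertices; in particular, there is a vertex subset W ⊆ V(G) of size at most r + r·2^r containing R such that the Grundy number of G equals the Grundy number of G[W] plus |V(G)∖W|. -/

import Mathlib

variable {V : Type*} [Fintype V] [DecidableEq V]

/-- A Grundy coloring of the vertex set `X` of `G`: an ordered partition of `X`
into nonempty independent sets such that every vertex of the `i`-th class has a
neighbor in every earlier class. -/
def GrundyColoringOn (G : SimpleGraph V) (X : Finset V) (C : List (Finset V)) : Prop :=
  (∀ A ∈ C, A.Nonempty) ∧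
  C.Pairwise Disjoint ∧
  (∀ v, v ∈ X ↔ ∃ A ∈ C, v ∈ A) ∧
  (∀ A ∈ C, ∀ u ∈ A, ∀ w ∈ A, ¬ G.Adj u w) ∧
  (∀ i j : ℕ, ∀ hi : i < C.length, ∀ hj : j < C.length, j < i →
     ∀ v ∈ C.get ⟨i, hi⟩, ∃ u ∈ C.get ⟨j, hj⟩, G.Adj u v)

/-- The set of lengths of Grundy colorings of `X` in `G`; its greatest element
is the Grundy number of the induced subgraph `G[X]`. -/
def grundySet (G : SimpleGraph V) (X : Finset V) : Set ℕ :=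
  {n | ∃ C : List (Finset V), GrundyColoringOn G X C ∧ C.length = n}

/-! ### Auxiliary lemmas -/

lemma grundy_iff (G : SimpleGraph V) (X : Finset V) (C : List (Finset V)) :
    GrundyColoringOn G X C ↔
      ((∀ i (hi : i < C.length), (C[i]'hi).Nonempty) ∧
       (∀ i j (hi : i < C.length) (hj : j < C.length), i ≠ j →
          Disjoint (C[i]'hi) (C[j]'hj)) ∧
       (∀ x, x ∈ X ↔ ∃ i, ∃ hi : i < C.length, x ∈ C[i]'hi) ∧
       (∀ i (hi : i < C.length), ∀ u ∈ C[i]'hi, ∀ w ∈ C[i]'hi, ¬ G.Adj u w) ∧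
       (∀ i j (hi : i < C.length) (hj : j < C.length), j < i →
          ∀ x ∈ C[i]'hi, ∃ u ∈ C[j]'hj, G.Adj u x)) := by
  unfold GrundyColoringOn
  simp only [List.get_eq_getElem]
  constructor
  · rintro ⟨h1, h2, h3, h4, h5⟩
    refine ⟨fun i hi => h1 _ (List.getElem_mem hi), ?_, ?_,
      fun i hi => h4 _ (List.getElem_mem hi), h5⟩
    · rw [List.pairwise_iff_getElem] at h2
      intro i j hi hj hne
      rcases Nat.lt_or_ge i j with h | h
      · exact h2 i j hi hj h
      · exact (h2 j i hj hi (by omega)).symm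
    · intro x
      rw [h3 x]
      constructor
      · rintro ⟨A, hA, hxA⟩
        obtain ⟨i, hi, rfl⟩ := List.mem_iff_getElem.mp hA
        exact ⟨i, hi, hxA⟩
      · rintro ⟨i, hi, h⟩
        exact ⟨_, List.getElem_mem hi, h⟩
  · rintro ⟨h1, h2, h3, h4, h5⟩
    refine ⟨?_, ?_, ?_, ?_, h5⟩
    · intro A hA; obtain ⟨i, hi, rfl⟩ := List.mem_iff_getElem.mp hA; exact h1 i hi
    · rw [List.pairwise_iff_getElem]
      intro i j hi hj hij
      exact h2 i j hi hj (by omega)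
    · intro x
      rw [h3 x]
      constructor
      · rintro ⟨i, hi, h⟩; exact ⟨_, List.getElem_mem hi, h⟩
      · rintro ⟨A, hA, hxA⟩; obtain ⟨i, hi, rfl⟩ := List.mem_iff_getElem.mp hA
        exact ⟨i, hi, hxA⟩
    · intro A hA; obtain ⟨i, hi, rfl⟩ := List.mem_iff_getElem.mp hA; exact h4 i hi

/-- The counting lemma: if `α ∈ C[p] ∩ R'` and `D` is a set of pairwise-adjacent
clique vertices not adjacent to `α`, each living in a class before `p`, then
since `α` has a neighbor in each earlier class, each such class contributes a
distinct element of `R'`. -/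
lemma count_lemma (G : SimpleGraph V) (R : Finset V)
    (hcl : ∀ {u w : V}, u ∉ R → w ∉ R → u ≠ w → G.Adj u w)
    (C : List (Finset V))
    (h2 : ∀ i j (hi : i < C.length) (hj : j < C.length), i ≠ j →
        Disjoint (C[i]'hi) (C[j]'hj))
    (h4 : ∀ i (hi : i < C.length), ∀ u ∈ C[i]'hi, ∀ w ∈ C[i]'hi, ¬ G.Adj u w)
    (p : ℕ) (hp : p < C.length) (α : V) (hα : α ∈ C[p]'hp) (D R' : Finset V)
    (hαR' : α ∈ R')
    (hD : ∀ u ∈ D, u ∉ R ∧ ¬ G.Adj α u ∧ ∃ j, ∃ hj : j < C.length, j < p ∧ u ∈ C[j]'hj)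
    (hdom : ∀ j (hj : j < C.length), j < p → ∃ y ∈ C[j]'hj, G.Adj y α)
    (hR' : ∀ y, y ∈ R → (∃ j, ∃ hj : j < C.length, j < p ∧ y ∈ C[j]'hj) → y ∈ R') :
    D.card + 1 ≤ R'.card := by
  classical
  have hspec : ∀ u : V, ∃ y : V, u ∈ D →
      y ∈ R' ∧ G.Adj y α ∧ ∃ j, ∃ hj : j < C.length, j < p ∧ u ∈ C[j]'hj ∧ y ∈ C[j]'hj := by
    intro u
    by_cases hu : u ∈ D
    · obtain ⟨huR, hadj, j, hj, hjp, huj⟩ := hD u hu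
      obtain ⟨y, hy, hyα⟩ := hdom j hj hjp
      have hyu : y ≠ u := by rintro rfl; exact hadj hyα.symm
      have hyR : y ∈ R := by
        by_contra hyR
        exact h4 j hj y hy u huj (hcl hyR huR hyu)
      exact ⟨y, fun _ => ⟨hR' y hyR ⟨j, hj, hjp, hy⟩, hyα, j, hj, hjp, huj, hy⟩⟩
    · exact ⟨α, fun h => absurd h hu⟩
  choose f hf using hspec
  have hinj : Set.InjOn f ↑D := by
    intro a ha b hb hab
    simp only [Finset.mem_coe] at ha hb
    obtain ⟨-, -, j, hj, hjp, haj, hfj⟩ := hf a ha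
    obtain ⟨-, -, j', hj', hjp', hbj, hfj'⟩ := hf b hb
    have hjj : j = j' := by
      by_contra hne
      exact (Finset.disjoint_left.mp (h2 j j' hj hj' hne) hfj) (hab ▸ hfj')
    subst hjj
    by_contra hne
    obtain ⟨haR, -, -⟩ := hD a ha
    obtain ⟨hbR, -, -⟩ := hD b hb
    exact h4 j hj a haj b hbj (hcl haR hbR hne)
  have hαni : α ∉ D.image f := by
    intro hmem
    obtain ⟨u, hu, hfu⟩ := Finset.mem_image.mp hmem
    exact G.loopless.irrefl α (hfu ▸ (hf u hu).2.1)
  have hsub : insert α (D.image f) ⊆ R' := by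
    intro y hy
    rcases Finset.mem_insert.mp hy with rfl | hy
    · exact hαR'
    · obtain ⟨u, hu, rfl⟩ := Finset.mem_image.mp hy
      exact (hf u hu).1
  calc D.card + 1 = (insert α (D.image f)).card := by
        rw [Finset.card_insert_of_notMem hαni, Finset.card_image_of_injOn hinj]
    _ ≤ R'.card := Finset.card_le_card hsub

lemma caseA_lemma (G : SimpleGraph V) (Y : Finset V) (C : List (Finset V)) (p : ℕ)
    (hp : p < C.length)
    (h1 : ∀ i (hi : i < C.length), i ≠ p → (C[i]'hi).Nonempty)
    (h2 : ∀ i j (hi : i < C.length) (hj : j < C.length), i ≠ j →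
        Disjoint (C[i]'hi) (C[j]'hj))
    (h3 : ∀ z, z ∈ Y ↔ ∃ i, ∃ hi : i < C.length, z ∈ C[i]'hi)
    (h4 : ∀ i (hi : i < C.length), ∀ u ∈ C[i]'hi, ∀ w ∈ C[i]'hi, ¬ G.Adj u w)
    (h5' : ∀ i j (hi : i < C.length) (hj : j < C.length), j < i → j ≠ p →
        ∀ z ∈ C[i]'hi, ∃ u ∈ C[j]'hj, G.Adj u z)
    (hCp : C[p]'hp = ∅) :
    ∃ C', GrundyColoringOn G Y C' ∧ C.length = C'.length + 1 := by
  classical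
  set L := C.eraseIdx p with hL
  have hlen : L.length = C.length - 1 := by
    rw [hL, List.length_eraseIdx_of_lt hp]
  have hlenraw : (C.eraseIdx p).length = C.length - 1 := List.length_eraseIdx_of_lt hp
  have key : ∀ i' (hi' : i' < L.length), ∃ (i : ℕ) (hi : i < C.length), i ≠ p ∧
      ((i' < p ∧ i = i') ∨ (p ≤ i' ∧ i = i' + 1)) ∧ L[i']'hi' = C[i]'hi := by
    intro i' hi'
    by_cases hc : i' < p
    · exact ⟨i', by omega, by omega, Or.inl ⟨hc, rfl⟩,
        List.getElem_eraseIdx_of_lt (l := C) (i := p) hi' hc⟩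
    · refine ⟨i' + 1, by omega, by omega, Or.inr ⟨by omega, rfl⟩,
        List.getElem_eraseIdx_of_ge (l := C) (i := p) hi' (by omega)⟩
  have key2 : ∀ i (hi : i < C.length), i ≠ p →
      ∃ i', ∃ hi' : i' < L.length, L[i']'hi' = C[i]'hi := by
    intro i hi hip
    by_cases hc : i < p
    · exact ⟨i, by omega, List.getElem_eraseIdx_of_lt (l := C) (i := p) (j := i) (by omega) hc⟩
    · have hpi : p < i := by omega
      refine ⟨i - 1, by omega, ?_⟩
      have := List.getElem_eraseIdx_of_ge (l := C) (i := p) (j := i - 1) (by omega) (by omega)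
      rw [this]
      congr 1
      omega
  refine ⟨L, (grundy_iff G Y L).mpr ⟨?_, ?_, ?_, ?_, ?_⟩, by omega⟩
  · intro i' hi'
    obtain ⟨i, hi, hip, -, hLe⟩ := key i' hi'
    rw [hLe]; exact h1 i hi hip
  · intro i' j' hi' hj' hne
    obtain ⟨i, hi, -, hrel, hLe⟩ := key i' hi'
    obtain ⟨j, hj, -, hrel', hLe'⟩ := key j' hj'
    rw [hLe, hLe']
    exact h2 i j hi hj (by omega)
  · intro z
    rw [h3 z]
    constructor
    · rintro ⟨i, hi, hz⟩
      have hip : i ≠ p := by rintro rfl; rw [hCp] at hz; exact absurd hz (Finset.notMem_empty z)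
      obtain ⟨i', hi', hLe⟩ := key2 i hi hip
      exact ⟨i', hi', hLe ▸ hz⟩
    · rintro ⟨i', hi', hz⟩
      obtain ⟨i, hi, -, -, hLe⟩ := key i' hi'
      exact ⟨i, hi, hLe ▸ hz⟩
  · intro i' hi'
    obtain ⟨i, hi, -, -, hLe⟩ := key i' hi'
    rw [hLe]; exact h4 i hi
  · intro i' j' hi' hj' hlt z hz
    obtain ⟨i, hi, -, hrel, hLe⟩ := key i' hi'
    obtain ⟨j, hj, hjp, hrel', hLe'⟩ := key j' hj'
    rw [hLe] at hz; rw [hLe']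
    exact h5' i j hi hj (by omega) hjp z hz

lemma finish_lemma (G : SimpleGraph V) (Y : Finset V) (C : List (Finset V)) (p g : ℕ)
    (hp : p < C.length) (hg : g < C.length) (hpg : p < g) (x : V)
    (h1 : ∀ i (hi : i < C.length), i ≠ p → (C[i]'hi).Nonempty)
    (h2 : ∀ i j (hi : i < C.length) (hj : j < C.length), i ≠ j →
        Disjoint (C[i]'hi) (C[j]'hj))
    (h3 : ∀ z, z ∈ Y ↔ ∃ i, ∃ hi : i < C.length, z ∈ C[i]'hi)
    (h4 : ∀ i (hi : i < C.length), ∀ u ∈ C[i]'hi, ∀ w ∈ C[i]'hi, ¬ G.Adj u w)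
    (h5' : ∀ i j (hi : i < C.length) (hj : j < C.length), j < i → j ≠ p →
        ∀ z ∈ C[i]'hi, ∃ u ∈ C[j]'hj, G.Adj u z)
    (hxg : C[g]'hg = {x})
    (hxind : ∀ u ∈ C[p]'hp, ¬ G.Adj u x ∧ ¬ G.Adj x u)
    (hxdom : ∀ j (hj : j < C.length), j < p → ∃ u ∈ C[j]'hj, G.Adj u x)
    (hfix : ∀ i (hi : i < C.length), p < i → i ≠ g →
        ∀ z ∈ C[i]'hi, ∃ u ∈ insert x (C[p]'hp), G.Adj u z) :
    ∃ C', GrundyColoringOn G Y C' ∧ C.length = C'.length + 1 := by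
  classical
  set A := insert x (C[p]'hp) with hA
  set L := (C.set p A).eraseIdx g with hL
  have hlenset : (C.set p A).length = C.length := List.length_set
  have hlen : L.length = C.length - 1 := by
    rw [hL, List.length_eraseIdx_of_lt (by omega)]
    omega
  have hlenraw : ((C.set p A).eraseIdx g).length = C.length - 1 := by
    rw [List.length_eraseIdx_of_lt (by rw [List.length_set]; omega), List.length_set]
  have hxget : x ∈ C[g]'hg := by rw [hxg]; exact Finset.mem_singleton_self x
  have key : ∀ i' (hi' : i' < L.length), ∃ (i : ℕ) (hi : i < C.length), i ≠ g ∧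
      ((i' < g ∧ i = i') ∨ (g ≤ i' ∧ i = i' + 1)) ∧
      ((i = p ∧ L[i']'hi' = A) ∨ (i ≠ p ∧ L[i']'hi' = C[i]'hi)) := by
    intro i' hi'
    by_cases hc : i' < g
    · refine ⟨i', by omega, by omega, Or.inl ⟨hc, rfl⟩, ?_⟩
      have he : L[i']'hi' = (C.set p A)[i']'(by omega) :=
        List.getElem_eraseIdx_of_lt (l := C.set p A) (i := g) hi' hc
      rw [he, List.getElem_set]
      by_cases hip : p = i'
      · subst hip; exact Or.inl ⟨rfl, if_pos rfl⟩
      · exact Or.inr ⟨fun h => hip h.symm, if_neg hip⟩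
    · have hge : g ≤ i' := by omega
      refine ⟨i' + 1, by omega, by omega, Or.inr ⟨hge, rfl⟩, Or.inr ⟨by omega, ?_⟩⟩
      have he : L[i']'hi' = (C.set p A)[i' + 1]'(by omega) :=
        List.getElem_eraseIdx_of_ge (l := C.set p A) (i := g) hi' hge
      rw [he, List.getElem_set, if_neg (by omega)]
  have key2 : ∀ i (hi : i < C.length), i ≠ g →
      ∃ i', ∃ hi' : i' < L.length,
        ((i = p ∧ L[i']'hi' = A) ∨ (i ≠ p ∧ L[i']'hi' = C[i]'hi)) := by
    intro i hi hig
    by_cases hc : i < g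
    · refine ⟨i, by omega, ?_⟩
      have he : L[i]'(by omega) = (C.set p A)[i]'(by omega) :=
        List.getElem_eraseIdx_of_lt (l := C.set p A) (i := g) (j := i) (by omega) hc
      rw [he, List.getElem_set]
      by_cases hip : p = i
      · subst hip; exact Or.inl ⟨rfl, if_pos rfl⟩
      · exact Or.inr ⟨fun h => hip h.symm, if_neg hip⟩
    · have hgi : g < i := by omega
      refine ⟨i - 1, by omega, Or.inr ⟨by omega, ?_⟩⟩
      have he : L[i - 1]'(by omega) = (C.set p A)[i - 1 + 1]'(by omega) :=
        List.getElem_eraseIdx_of_ge (l := C.set p A) (i := g) (j := i - 1) (by omega) (by omega)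
      rw [he, List.getElem_set, if_neg (by omega)]
      congr 1
      omega
  have hAdisj : ∀ j (hj : j < C.length), j ≠ p → j ≠ g → Disjoint A (C[j]'hj) := by
    intro j hj hjp hjg
    rw [Finset.disjoint_left]
    intro a ha haj
    rcases Finset.mem_insert.mp ha with rfl | ha
    · exact (Finset.disjoint_left.mp (h2 g j hg hj (Ne.symm hjg)) hxget) haj
    · exact (Finset.disjoint_left.mp (h2 p j hp hj (Ne.symm hjp)) ha) haj
  refine ⟨L, (grundy_iff G Y L).mpr ⟨?_, ?_, ?_, ?_, ?_⟩, by omega⟩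
  · intro i' hi'
    obtain ⟨i, hi, hig, -, hc⟩ := key i' hi'
    rcases hc with ⟨-, hLe⟩ | ⟨hip, hLe⟩
    · rw [hLe]; exact Finset.insert_nonempty _ _
    · rw [hLe]; exact h1 i hi hip
  · intro i' j' hi' hj' hne
    obtain ⟨i, hi, hig, hrel, hc⟩ := key i' hi'
    obtain ⟨j, hj, hjg, hrel', hc'⟩ := key j' hj'
    have hij : i ≠ j := by omega
    rcases hc with ⟨hip, hLe⟩ | ⟨hip, hLe⟩ <;> rcases hc' with ⟨hjp, hLe'⟩ | ⟨hjp, hLe'⟩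
    · omega
    · rw [hLe, hLe']; exact hAdisj j hj hjp hjg
    · rw [hLe, hLe']; exact (hAdisj i hi hip hig).symm
    · rw [hLe, hLe']; exact h2 i j hi hj hij
  · intro z
    rw [h3 z]
    constructor
    · rintro ⟨i, hi, hz⟩
      by_cases hig : i = g
      · subst hig
        rw [hxg, Finset.mem_singleton] at hz
        subst hz
        obtain ⟨i', hi', hc⟩ := key2 p hp (by omega)
        rcases hc with ⟨-, hLe⟩ | ⟨hip, -⟩
        · exact ⟨i', hi', hLe ▸ Finset.mem_insert_self _ _⟩
        · exact absurd rfl hip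
      · obtain ⟨i', hi', hc⟩ := key2 i hi hig
        rcases hc with ⟨hip, hLe⟩ | ⟨-, hLe⟩
        · have hz' : z ∈ C[p]'hp := by subst hip; exact hz
          exact ⟨i', hi', hLe ▸ Finset.mem_insert_of_mem hz'⟩
        · exact ⟨i', hi', hLe ▸ hz⟩
    · rintro ⟨i', hi', hz⟩
      obtain ⟨i, hi, -, -, hc⟩ := key i' hi'
      rcases hc with ⟨hip, hLe⟩ | ⟨-, hLe⟩
      · rw [hLe] at hz
        rcases Finset.mem_insert.mp hz with rfl | hz
        · exact ⟨g, hg, hxget⟩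
        · exact ⟨p, hp, hz⟩
      · exact ⟨i, hi, hLe ▸ hz⟩
  · intro i' hi'
    obtain ⟨i, hi, -, -, hc⟩ := key i' hi'
    rcases hc with ⟨hip, hLe⟩ | ⟨-, hLe⟩
    · rw [hLe]
      intro u hu w hw
      rcases Finset.mem_insert.mp hu with rfl | hu <;>
        rcases Finset.mem_insert.mp hw with h | hw
      · exact h ▸ G.loopless.irrefl u
      · exact (hxind w hw).2
      · exact h ▸ (hxind u hu).1
      · exact h4 p hp u hu w hw
    · rw [hLe]; exact h4 i hi
  · intro i' j' hi' hj' hlt z hz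
    obtain ⟨i, hi, hig, hrel, hc⟩ := key i' hi'
    obtain ⟨j, hj, hjg, hrel', hc'⟩ := key j' hj'
    have hji : j < i := by omega
    rcases hc' with ⟨hjp, hLe'⟩ | ⟨hjp, hLe'⟩
    · -- target class is A
      rw [hLe']
      rcases hc with ⟨hip, -⟩ | ⟨hip, hLe⟩
      · omega
      · rw [hLe] at hz
        exact hfix i hi (by omega) hig z hz
    · rw [hLe']
      rcases hc with ⟨hip, hLe⟩ | ⟨hip, hLe⟩
      · rw [hLe, hA] at hz
        rcases Finset.mem_insert.mp hz with rfl | hz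
        · exact hxdom j hj (by omega)
        · exact h5' p j hp hj (by omega) hjp z hz
      · rw [hLe] at hz
        exact h5' i j hi hj hji hjp z hz

/-- The repair lemma: a coloring of `Y` that is valid except that the class at
position `p` may have lost the clique vertex `q` can be repaired into a genuine
Grundy coloring of `Y` losing at most one class. -/
lemma rep_lemma (G : SimpleGraph V) (R : Finset V)
    (hcl : ∀ {u w : V}, u ∉ R → w ∉ R → u ≠ w → G.Adj u w)
    (S T Y : Finset V)
    (hT : ∀ u ∈ T, u ∈ Y ∧ u ∉ R ∧ ∀ ρ ∈ R, (G.Adj u ρ ↔ ρ ∈ S))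
    (hTcard : R.card ≤ T.card) :
    ∀ n : ℕ, ∀ (C : List (Finset V)) (p : ℕ) (q : V) (hp : p < C.length),
    C.length - p ≤ n →
    q ∉ R → (∀ ρ ∈ R, (G.Adj q ρ ↔ ρ ∈ S)) →
    (∀ i (hi : i < C.length), i ≠ p → (C[i]'hi).Nonempty) →
    (∀ i j (hi : i < C.length) (hj : j < C.length), i ≠ j →
        Disjoint (C[i]'hi) (C[j]'hj)) →
    (∀ x, x ∈ Y ↔ ∃ i, ∃ hi : i < C.length, x ∈ C[i]'hi) →
    (∀ i (hi : i < C.length), ∀ u ∈ C[i]'hi, ∀ w ∈ C[i]'hi, ¬ G.Adj u w) →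
    (∀ i j (hi : i < C.length) (hj : j < C.length), j < i →
        ∀ x ∈ C[i]'hi, (∃ u ∈ C[j]'hj, G.Adj u x) ∨ (j = p ∧ G.Adj q x)) →
    (∀ j (hj : j < C.length), j < p → ∃ y ∈ C[j]'hj, y ∉ R ∨ G.Adj q y) →
    (∀ x ∈ C[p]'hp, ¬ G.Adj q x ∧ x ≠ q) →
    ∃ C', GrundyColoringOn G Y C' ∧ C.length ≤ C'.length + 1 := by
  intro n
  induction n with
  | zero => intro C p q hp hn; omega
  | succ n ih =>
    intro C p q hp hn hqR hqS h1 h2 h3 h4 h5 h7 h9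
    classical
    have h5' : ∀ i j (hi : i < C.length) (hj : j < C.length), j < i → j ≠ p →
        ∀ x ∈ C[i]'hi, ∃ u ∈ C[j]'hj, G.Adj u x := by
      intro i j hi hj hji hjp x hx
      rcases h5 i j hi hj hji x hx with h | ⟨h, -⟩
      · exact h
      · exact absurd h hjp
    have hCpR : ∀ x ∈ C[p]'hp, x ∈ R := by
      intro x hx
      by_contra hxR
      obtain ⟨hnadj, hne⟩ := h9 x hx
      exact hnadj (hcl hqR hxR (Ne.symm hne))
    have hCpS : ∀ x ∈ C[p]'hp, ¬ G.Adj q x ∧ x ∈ R ∧ x ∉ S := by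
      intro x hx
      have hxR := hCpR x hx
      have hnadj := (h9 x hx).1
      exact ⟨hnadj, hxR, fun hS => hnadj ((hqS x hxR).mpr hS)⟩
    have twin_of : ∀ (u y : V), u ∉ R → (∀ ρ ∈ R, (G.Adj u ρ ↔ ρ ∈ S)) → y ≠ u →
        (y ∉ R ∨ G.Adj q y) → G.Adj y u := by
      intro u y huR huS hyu hcase
      rcases hcase with hyR | hqy
      · exact hcl hyR huR hyu
      · by_cases hyR : y ∈ R
        · exact ((huS y hyR).mpr ((hqS y hyR).mp hqy)).symm
        · exact hcl hyR huR hyu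
    by_cases hA : (C[p]'hp) = ∅
    · obtain ⟨C', hC', hlen⟩ := caseA_lemma G Y C p hp h1 h2 h3 h4 h5' hA
      exact ⟨C', hC', by omega⟩
    by_cases hbr : ∃ i, ∃ hi : i < C.length, p < i ∧ ∃ x ∈ C[i]'hi,
        ¬ ∃ u ∈ C[p]'hp, G.Adj u x
    · obtain ⟨g0, hg0, hpg0, x0, hx0g, hx0br⟩ := hbr
      by_cases htw : ∃ u ∈ T, u ≠ q ∧ ∃ i, ∃ hi : i < C.length, p < i ∧ u ∈ C[i]'hi
      · -- a twin exists in a later class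
        obtain ⟨u, huT, huq, g, hg, hpg, hug⟩ := htw
        obtain ⟨huY, huR, huS⟩ := hT u huT
        have hCp_nu : ∀ y ∈ C[p]'hp, ¬ G.Adj u y ∧ ¬ G.Adj y u := by
          intro y hy
          obtain ⟨-, hyR, hyS⟩ := hCpS y hy
          have h1' : ¬ G.Adj u y := fun h => hyS ((huS y hyR).mp h)
          exact ⟨h1', fun h => h1' h.symm⟩
        have hudom : ∀ j (hj : j < C.length), j < p → ∃ z ∈ C[j]'hj, G.Adj z u := by
          intro j hj hjp
          obtain ⟨y, hy, hor⟩ := h7 j hj hjp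
          have hyu : y ≠ u := by
            rintro rfl
            exact (Finset.disjoint_left.mp (h2 j g hj hg (by omega)) hy) hug
          exact ⟨y, hy, twin_of u y huR huS hyu hor⟩
        have hfixgen : ∀ z, G.Adj q z → z ≠ u → G.Adj u z := by
          intro z hz hzu
          by_cases hzR : z ∈ R
          · exact (huS z hzR).mpr ((hqS z hzR).mp hz)
          · exact hcl huR hzR (fun h => hzu h.symm)
        by_cases hsing : ∀ z ∈ C[g]'hg, z = u
        · -- direct finish : u's class is a singleton
          have hxg : C[g]'hg = {u} :=
            Finset.eq_singleton_iff_unique_mem.mpr ⟨hug, hsing⟩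
          have hfix : ∀ i (hi : i < C.length), p < i → i ≠ g →
              ∀ z ∈ C[i]'hi, ∃ w ∈ insert u (C[p]'hp), G.Adj w z := by
            intro i hi hpi hig z hz
            rcases h5 i p hi hp hpi z hz with ⟨w, hw, hadj⟩ | ⟨-, hqz⟩
            · exact ⟨w, Finset.mem_insert_of_mem hw, hadj⟩
            · have hzu : z ≠ u := by
                rintro rfl
                exact (Finset.disjoint_left.mp (h2 i g hi hg hig) hz) hug
              exact ⟨u, Finset.mem_insert_self _ _, hfixgen z hqz hzu⟩
          have hCp_nu2 : ∀ y ∈ C[p]'hp, ¬ G.Adj y u ∧ ¬ G.Adj u y :=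
            fun y hy => ⟨(hCp_nu y hy).2, (hCp_nu y hy).1⟩
          obtain ⟨C', hC', hlen⟩ := finish_lemma G Y C p g hp hg hpg u h1 h2 h3 h4 h5'
            hxg hCp_nu2 hudom hfix
          exact ⟨C', hC', by omega⟩
        · -- recursion : move u into class p and recurse at class g
          push_neg at hsing
          obtain ⟨z0, hz0g, hz0u⟩ := hsing
          set A := insert u (C[p]'hp) with hAdef
          set B := (C[g]'hg).erase u with hBdef
          set C2 := (C.set p A).set g B with hC2def
          have hlen2 : C2.length = C.length := by
            rw [hC2def, List.length_set, List.length_set]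
          have hpg' : p ≠ g := by omega
          have hget2 : ∀ i (hi : i < C2.length),
              C2[i]'hi = if g = i then B else if p = i then A else C[i]'(by omega) := by
            intro i hi
            simp only [hC2def, List.getElem_set]
          have hu_np : u ∉ C[p]'hp := fun h => huR (hCpR u h)
          have hkey : ∀ i (hi : i < C.length), i ≠ p → i ≠ g → u ∉ C[i]'hi := by
            intro i hi hip hig h
            exact (Finset.disjoint_left.mp (h2 i g hi hg hig) h) hug
          suffices hrec : ∃ C', GrundyColoringOn G Y C' ∧ C2.length ≤ C'.length + 1 by
            obtain ⟨C', hC', hlen'⟩ := hrec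
            exact ⟨C', hC', by omega⟩
          apply ih C2 g u (by omega) (by omega) huR huS
          · -- h1 for C2
            intro i hi hig
            rw [hget2 i hi, if_neg (by omega)]
            by_cases hip : p = i
            · rw [if_pos hip]; exact Finset.insert_nonempty _ _
            · rw [if_neg hip]; exact h1 i (by omega) (fun h => hip h.symm)
          · -- h2 for C2
            intro i j hi hj hne
            rw [hget2 i hi, hget2 j hj, Finset.disjoint_left]
            intro a ha haj
            have hBsub : B ⊆ C[g]'hg := Finset.erase_subset _ _
            have hAmem : ∀ b, b ∈ A → b = u ∨ b ∈ C[p]'hp :=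
              fun b hb => Finset.mem_insert.mp hb
            by_cases hgi : g = i
            · rw [if_pos hgi] at ha
              by_cases hgj : g = j
              · exact hne (by omega)
              · rw [if_neg hgj] at haj
                by_cases hpj : p = j
                · rw [if_pos hpj] at haj
                  rcases hAmem a haj with rfl | haj
                  · exact (Finset.notMem_erase a _) ha
                  · exact (Finset.disjoint_left.mp (h2 g p hg hp (by omega))
                      (hBsub ha)) haj
                · rw [if_neg hpj] at haj
                  exact (Finset.disjoint_left.mp (h2 g j hg (by omega) (by omega))
                    (hBsub ha)) haj
            · rw [if_neg hgi] at ha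
              by_cases hpi : p = i
              · rw [if_pos hpi] at ha
                by_cases hgj : g = j
                · rw [if_pos hgj] at haj
                  rcases hAmem a ha with rfl | ha
                  · exact (Finset.notMem_erase a _) haj
                  · exact (Finset.disjoint_left.mp (h2 p g hp hg (by omega)) ha)
                      (hBsub haj)
                · rw [if_neg hgj] at haj
                  by_cases hpj : p = j
                  · exact hne (by omega)
                  · rw [if_neg hpj] at haj
                    rcases hAmem a ha with rfl | ha
                    · exact hkey j (by omega) (fun h => hpj h.symm)
                        (fun h => hgj h.symm) haj
                    · exact (Finset.disjoint_left.mp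
                        (h2 p j hp (by omega) (by omega)) ha) haj
              · rw [if_neg hpi] at ha
                by_cases hgj : g = j
                · rw [if_pos hgj] at haj
                  exact (Finset.disjoint_left.mp (h2 i g (by omega) hg (by omega))
                    ha) (hBsub haj)
                · rw [if_neg hgj] at haj
                  by_cases hpj : p = j
                  · rw [if_pos hpj] at haj
                    rcases hAmem a haj with rfl | haj
                    · exact hkey i (by omega) (fun h => hpi h.symm)
                        (fun h => hgi h.symm) ha
                    · exact (Finset.disjoint_left.mp
                        (h2 i p (by omega) hp (by omega)) ha) haj
                  · rw [if_neg hpj] at haj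
                    exact (Finset.disjoint_left.mp
                      (h2 i j (by omega) (by omega) hne) ha) haj
          · -- h3 for C2
            intro x
            rw [h3 x]
            constructor
            · rintro ⟨i, hi, hx⟩
              by_cases hgi : g = i
              · subst hgi
                by_cases hxu : x = u
                · subst hxu
                  refine ⟨p, by omega, ?_⟩
                  rw [hget2 p (by omega), if_neg (Ne.symm hpg'), if_pos rfl]
                  exact Finset.mem_insert_self _ _
                · refine ⟨g, by omega, ?_⟩
                  rw [hget2 g (by omega), if_pos rfl]
                  exact Finset.mem_erase.mpr ⟨hxu, hx⟩
              · by_cases hpi : p = i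
                · subst hpi
                  refine ⟨p, by omega, ?_⟩
                  rw [hget2 p (by omega), if_neg (Ne.symm hpg'), if_pos rfl]
                  exact Finset.mem_insert_of_mem hx
                · refine ⟨i, by omega, ?_⟩
                  rw [hget2 i (by omega), if_neg hgi, if_neg hpi]
                  exact hx
            · rintro ⟨i, hi, hx⟩
              rw [hget2 i hi] at hx
              by_cases hgi : g = i
              · rw [if_pos hgi] at hx
                exact ⟨g, hg, (Finset.erase_subset _ _) hx⟩
              · rw [if_neg hgi] at hx
                by_cases hpi : p = i
                · rw [if_pos hpi] at hx
                  rcases Finset.mem_insert.mp hx with rfl | hx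
                  · exact ⟨g, hg, hug⟩
                  · exact ⟨p, hp, hx⟩
                · rw [if_neg hpi] at hx
                  exact ⟨i, by omega, hx⟩
          · -- h4 for C2
            intro i hi x hx w hw
            rw [hget2 i hi] at hx hw
            by_cases hgi : g = i
            · rw [if_pos hgi] at hx hw
              exact h4 g hg x ((Finset.erase_subset _ _) hx) w ((Finset.erase_subset _ _) hw)
            · rw [if_neg hgi] at hx hw
              by_cases hpi : p = i
              · rw [if_pos hpi] at hx hw
                rcases Finset.mem_insert.mp hx with rfl | hx <;>
                  rcases Finset.mem_insert.mp hw with h | hw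
                · exact h ▸ G.loopless.irrefl x
                · exact (hCp_nu w hw).1
                · exact h ▸ (hCp_nu x hx).2
                · exact h4 p hp x hx w hw
              · rw [if_neg hpi] at hx hw
                exact h4 i (by omega) x hx w hw
          · -- h5 for C2
            intro i j hi hj hji x hx
            rw [hget2 i hi] at hx
            rw [hget2 j hj]
            by_cases hgj : g = j
            · -- target class is B (= new exception class g); g = j < i
              subst hgj
              rw [if_pos rfl]
              have hig : g ≠ i := by omega
              have hip2 : p ≠ i := by omega
              rw [if_neg (by omega), if_neg (by omega)] at hx
              obtain ⟨w, hw, hadj⟩ := h5' i g (by omega) hg hji (by omega) x hx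
              by_cases hwu : w = u
              · exact Or.inr ⟨rfl, hwu ▸ hadj⟩
              · exact Or.inl ⟨w, Finset.mem_erase.mpr ⟨hwu, hw⟩, hadj⟩
            · rw [if_neg hgj]
              by_cases hpj : p = j
              · -- target class is A
                subst hpj
                rw [if_pos rfl]
                left
                by_cases hgi : g = i
                · -- x ∈ B
                  rw [if_pos hgi] at hx
                  have hxB : x ∈ (C[g]'hg).erase u := by rw [hBdef] at hx; exact hx
                  have hxg' : x ∈ C[g]'hg := (Finset.erase_subset _ _) hxB
                  have hxu : x ≠ u := (Finset.mem_erase.mp hxB).1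
                  rcases h5 g p hg hp (by omega) x hxg' with ⟨w, hw, hadj⟩ | ⟨-, hqx⟩
                  · exact ⟨w, Finset.mem_insert_of_mem hw, hadj⟩
                  · -- impossible-ish: but we can use u
                    have : G.Adj u x := by
                      by_cases hxR : x ∈ R
                      · exfalso
                        exact h4 g hg u hug x hxg'
                          ((huS x hxR).mpr ((hqS x hxR).mp hqx))
                      · exact hcl huR hxR (fun h => hxu h.symm)
                    exact ⟨u, Finset.mem_insert_self _ _, this⟩
                · rw [if_neg hgi] at hx
                  have hpi : p ≠ i := by omega
                  rw [if_neg hpi] at hx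
                  rcases h5 i p (by omega) hp hji x hx with ⟨w, hw, hadj⟩ | ⟨-, hqx⟩
                  · exact ⟨w, Finset.mem_insert_of_mem hw, hadj⟩
                  · have hxu : x ≠ u := by
                      rintro rfl
                      exact (Finset.disjoint_left.mp
                        (h2 i g (by omega) hg (fun h => hgi h.symm)) hx) hug
                    exact ⟨u, Finset.mem_insert_self _ _, hfixgen x hqx hxu⟩
              · -- target class is C[j], j ∉ {p, g}
                rw [if_neg hpj]
                left
                by_cases hgi : g = i
                · rw [if_pos hgi] at hx
                  rw [hBdef] at hx
                  have hxg' : x ∈ C[g]'hg := (Finset.erase_subset _ _) hx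
                  exact h5' g j hg (by omega) (by omega) (fun h => hpj h.symm) x hxg'
                · rw [if_neg hgi] at hx
                  by_cases hpi : p = i
                  · rw [if_pos hpi] at hx
                    rcases Finset.mem_insert.mp hx with rfl | hx
                    · -- x = u : u at class p needs neighbors below p; j < i = p
                      have hjp : j < p := by omega
                      exact hudom j (by omega) hjp
                    · exact h5' p j hp (by omega) (by omega) (fun h => hpj h.symm) x hx
                  · rw [if_neg hpi] at hx
                    exact h5' i j (by omega) (by omega) hji (fun h => hpj h.symm) x hx
          · -- h7 for C2 (with new q = u, new p = g)
            intro j hj hjg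
            by_cases hpj : p = j
            · subst hpj
              refine ⟨u, ?_, Or.inl huR⟩
              rw [hget2 p hj, if_neg (Ne.symm hpg'), if_pos rfl]
              exact Finset.mem_insert_self _ _
            · rw [hget2 j hj, if_neg (by omega), if_neg hpj]
              by_cases hjp : j < p
              · obtain ⟨y, hy, hor⟩ := h7 j (by omega) hjp
                refine ⟨y, hy, ?_⟩
                rcases hor with hyR | hqy
                · exact Or.inl hyR
                · by_cases hyR : y ∈ R
                  · exact Or.inr (((huS y hyR).mpr ((hqS y hyR).mp hqy)))
                  · exact Or.inl hyR
              · -- p < j < g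
                have hpj' : p < j := by omega
                obtain ⟨w, hw, hadj⟩ := h5' g j hg (by omega) (by omega) (by omega) u hug
                exact ⟨w, hw, Or.inr hadj.symm⟩
          · -- h9 for C2
            intro x hx
            rw [hget2 g (by omega), if_pos rfl] at hx
            obtain ⟨hxu, hxg'⟩ := Finset.mem_erase.mp hx
            exact ⟨h4 g hg u hug x hxg', hxu⟩
      · -- stuck case: no twin in a later class
        push_neg at htw
        obtain ⟨α, hα⟩ := Finset.nonempty_iff_ne_empty.mpr hA
        obtain ⟨hαnadj, hαR, hαS⟩ := hCpS α hα
        have hcount : ∀ z, z ∈ R → ∀ i (hi : i < C.length), p < i → z ∉ C[i]'hi := by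
          intro z hzR i hi hpi hzi
          have hac : α ∈ R.erase z := by
            refine Finset.mem_erase.mpr ⟨?_, hαR⟩
            rintro rfl
            exact (Finset.disjoint_left.mp (h2 p i hp hi (by omega)) hα) hzi
          have hDc : ∀ u ∈ T.erase q, u ∉ R ∧ ¬ G.Adj α u ∧
              ∃ j, ∃ hj : j < C.length, j < p ∧ u ∈ C[j]'hj := by
            intro u hu
            obtain ⟨huq, huT⟩ := Finset.mem_erase.mp hu
            obtain ⟨huY, huR, huS⟩ := hT u huT
            refine ⟨huR, fun h => hαS ((huS α hαR).mp h.symm), ?_⟩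
            obtain ⟨j, hj, huj⟩ := (h3 u).mp huY
            have hjp : j ≠ p := fun h => huR (hCpR u (h ▸ huj))
            have hnotgt : ¬ p < j := fun hc => htw u huT huq j hj hc huj
            exact ⟨j, hj, by omega, huj⟩
          have hdomc : ∀ j (hj : j < C.length), j < p → ∃ y ∈ C[j]'hj, G.Adj y α := by
            intro j hj hjp
            exact h5' p j hp hj hjp (by omega) α hα
          have hR'c : ∀ y, y ∈ R →
              (∃ j, ∃ hj : j < C.length, j < p ∧ y ∈ C[j]'hj) → y ∈ R.erase z := by
            rintro y hyR ⟨j, hj, hjp, hyj⟩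
            refine Finset.mem_erase.mpr ⟨?_, hyR⟩
            rintro rfl
            exact (Finset.disjoint_left.mp (h2 j i hj hi (by omega)) hyj) hzi
          have hfin := count_lemma G R hcl C h2 h4 p hp α hα (T.erase q) (R.erase z)
            hac hDc hdomc hR'c
          have e1 : T.card - 1 ≤ (T.erase q).card := Finset.pred_card_le_card_erase
          have e2 : (R.erase z).card = R.card - 1 := Finset.card_erase_of_mem hzR
          have e3 : 1 ≤ R.card := Finset.card_pos.mpr ⟨z, hzR⟩
          omega
        have hx0R : x0 ∉ R := fun h => hcount x0 h g0 hg0 hpg0 hx0g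
        have hCL2 : ∀ z ∈ C[g0]'hg0, z = x0 := by
          intro z hz
          by_contra hne
          have hzR : z ∈ R := by
            by_contra hzR'
            exact h4 g0 hg0 z hz x0 hx0g (hcl hzR' hx0R hne)
          exact hcount z hzR g0 hg0 hpg0 hz
        have hxg : C[g0]'hg0 = {x0} :=
          Finset.eq_singleton_iff_unique_mem.mpr ⟨hx0g, hCL2⟩
        have hbr' : ∀ u ∈ C[p]'hp, ¬ G.Adj u x0 := by
          intro u hu
          by_contra h
          exact hx0br ⟨u, hu, h⟩
        have hxind : ∀ u ∈ C[p]'hp, ¬ G.Adj u x0 ∧ ¬ G.Adj x0 u := by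
          intro u hu
          exact ⟨hbr' u hu, fun h => hbr' u hu h.symm⟩
        have hxdom : ∀ j (hj : j < C.length), j < p → ∃ u ∈ C[j]'hj, G.Adj u x0 := by
          intro j hj hjp
          exact h5' g0 j hg0 hj (by omega) (by omega) x0 hx0g
        have hfix : ∀ i (hi : i < C.length), p < i → i ≠ g0 →
            ∀ z ∈ C[i]'hi, ∃ u ∈ insert x0 (C[p]'hp), G.Adj u z := by
          intro i hi hpi hig z hz
          rcases h5 i p hi hp hpi z hz with ⟨w, hw, hadj⟩ | ⟨-, hqz⟩
          · exact ⟨w, Finset.mem_insert_of_mem hw, hadj⟩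
          · have hzR : z ∉ R := fun h => hcount z h i hi hpi hz
            have hzx : z ≠ x0 := by
              rintro rfl
              exact (Finset.disjoint_left.mp (h2 i g0 hi hg0 hig) hz) hx0g
            exact ⟨x0, Finset.mem_insert_self _ _, hcl hx0R hzR (fun h => hzx h.symm)⟩
        obtain ⟨C', hC', hlen⟩ := finish_lemma G Y C p g0 hp hg0 hpg0 x0 h1 h2 h3 h4 h5'
          hxg hxind hxdom hfix
        exact ⟨C', hC', by omega⟩
    · -- no broken vertex : C itself works
      push_neg at hbr
      refine ⟨C, (grundy_iff G Y C).mpr ⟨?_, h2, h3, h4, ?_⟩, by omega⟩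
      · intro i hi
        by_cases hip : i = p
        · subst hip
          exact Finset.nonempty_iff_ne_empty.mpr hA
        · exact h1 i hi hip
      · intro i j hi hj hji x hx
        rcases h5 i j hi hj hji x hx with h | ⟨rfl, -⟩
        · exact h
        · exact hbr i hi hji x hx

/-- Deleting a clique vertex with at least `|R|` twins decreases the number of
classes of a Grundy coloring by at most one. -/
lemma del_lemma (G : SimpleGraph V) (R : Finset V)
    (hcl : ∀ {u w : V}, u ∉ R → w ∉ R → u ≠ w → G.Adj u w)
    (S T Y : Finset V) (v : V) (hv : v ∈ Y) (hvR : v ∉ R)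
    (hvS : ∀ ρ ∈ R, (G.Adj v ρ ↔ ρ ∈ S))
    (hT : ∀ u ∈ T, u ∈ Y.erase v ∧ u ∉ R ∧ ∀ ρ ∈ R, (G.Adj u ρ ↔ ρ ∈ S))
    (hTcard : R.card ≤ T.card)
    (C : List (Finset V)) (hC : GrundyColoringOn G Y C) :
    ∃ C', GrundyColoringOn G (Y.erase v) C' ∧ C.length ≤ C'.length + 1 := by
  classical
  rw [grundy_iff] at hC
  obtain ⟨h1, h2, h3, h4, h5⟩ := hC
  obtain ⟨p, hp, hvp⟩ := (h3 v).mp hv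
  set C1 := C.set p ((C[p]'hp).erase v) with hC1def
  have hlen1 : C1.length = C.length := List.length_set
  have hget1 : ∀ i (hi : i < C1.length),
      C1[i]'hi = if p = i then (C[p]'hp).erase v else C[i]'(by omega) := by
    intro i hi
    simp only [hC1def, List.getElem_set]
  have hvonly : ∀ i (hi : i < C.length), i ≠ p → v ∉ C[i]'hi := by
    intro i hi hip h
    exact (Finset.disjoint_left.mp (h2 i p hi hp hip) h) hvp
  suffices hrec : ∃ C', GrundyColoringOn G (Y.erase v) C' ∧ C1.length ≤ C'.length + 1 by
    obtain ⟨C', hC', hlen'⟩ := hrec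
    exact ⟨C', hC', by omega⟩
  apply rep_lemma G R hcl S T (Y.erase v) hT hTcard C1.length C1 p v (by omega) (by omega)
    hvR hvS
  · -- h1
    intro i hi hip
    rw [hget1 i hi, if_neg (fun h => hip h.symm)]
    exact h1 i (by omega)
  · -- h2
    intro i j hi hj hne
    rw [hget1 i hi, hget1 j hj]
    have hsub : (C[p]'hp).erase v ⊆ C[p]'hp := Finset.erase_subset _ _
    by_cases hpi : p = i <;> by_cases hpj : p = j
    · omega
    · rw [if_pos hpi, if_neg hpj]
      exact Finset.disjoint_of_subset_left hsub (h2 p j hp (by omega) (by omega))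
    · rw [if_neg hpi, if_pos hpj]
      exact Finset.disjoint_of_subset_right hsub (h2 i p (by omega) hp (by omega))
    · rw [if_neg hpi, if_neg hpj]
      exact h2 i j (by omega) (by omega) hne
  · -- h3
    intro x
    rw [Finset.mem_erase]
    constructor
    · rintro ⟨hxv, hxY⟩
      obtain ⟨i, hi, hx⟩ := (h3 x).mp hxY
      by_cases hpi : p = i
      · subst hpi
        refine ⟨p, by omega, ?_⟩
        rw [hget1 p (by omega), if_pos rfl]
        exact Finset.mem_erase.mpr ⟨hxv, hx⟩
      · refine ⟨i, by omega, ?_⟩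
        rw [hget1 i (by omega), if_neg hpi]
        exact hx
    · rintro ⟨i, hi, hx⟩
      rw [hget1 i hi] at hx
      by_cases hpi : p = i
      · rw [if_pos hpi] at hx
        obtain ⟨hxv, hx⟩ := Finset.mem_erase.mp hx
        exact ⟨hxv, (h3 x).mpr ⟨p, hp, hx⟩⟩
      · rw [if_neg hpi] at hx
        refine ⟨?_, (h3 x).mpr ⟨i, by omega, hx⟩⟩
        rintro rfl
        exact hvonly i (by omega) (fun h => hpi h.symm) hx
  · -- h4
    intro i hi x hx w hw
    rw [hget1 i hi] at hx hw
    by_cases hpi : p = i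
    · rw [if_pos hpi] at hx hw
      exact h4 p hp x ((Finset.erase_subset _ _) hx) w ((Finset.erase_subset _ _) hw)
    · rw [if_neg hpi] at hx hw
      exact h4 i (by omega) x hx w hw
  · -- h5
    intro i j hi hj hji x hx
    rw [hget1 i hi] at hx
    rw [hget1 j hj]
    by_cases hpj : p = j
    · subst hpj
      rw [if_pos rfl]
      have hpi : p ≠ i := by omega
      rw [if_neg hpi] at hx
      obtain ⟨w, hw, hadj⟩ := h5 i p (by omega) hp hji x hx
      by_cases hwv : w = v
      · exact Or.inr ⟨rfl, hwv ▸ hadj⟩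
      · exact Or.inl ⟨w, Finset.mem_erase.mpr ⟨hwv, hw⟩, hadj⟩
    · rw [if_neg hpj]
      by_cases hpi : p = i
      · rw [if_pos hpi] at hx
        have hx' : x ∈ C[i]'(by omega) := by
          subst hpi; exact (Finset.erase_subset _ _) hx
        exact Or.inl (h5 i j (by omega) (by omega) hji x hx')
      · rw [if_neg hpi] at hx
        exact Or.inl (h5 i j (by omega) (by omega) hji x hx)
  · -- h7
    intro j hj hjp
    rw [hget1 j hj, if_neg (by omega)]
    obtain ⟨y, hy, hadj⟩ := h5 p j hp (by omega) hjp v hvp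
    exact ⟨y, hy, Or.inr hadj.symm⟩
  · -- h9
    intro x hx
    rw [hget1 p (by omega), if_pos rfl] at hx
    obtain ⟨hxv, hx'⟩ := Finset.mem_erase.mp hx
    exact ⟨h4 p hp v hvp x hx', hxv⟩

/-- Extension lemma: a Grundy coloring of `X` extends by the new clique vertex
`v` as a last singleton class, provided `X` contains `|R|` twins of `v`. -/
lemma ext_lemma (G : SimpleGraph V) (R : Finset V)
    (hcl : ∀ {u w : V}, u ∉ R → w ∉ R → u ≠ w → G.Adj u w)
    (S T X : Finset V) (v : V) (hv : v ∉ X) (hvR : v ∉ R)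
    (hvS : ∀ ρ ∈ R, (G.Adj v ρ ↔ ρ ∈ S))
    (hT : ∀ u ∈ T, u ∈ X ∧ u ∉ R ∧ ∀ ρ ∈ R, (G.Adj u ρ ↔ ρ ∈ S))
    (hTcard : R.card ≤ T.card)
    (C : List (Finset V)) (hC : GrundyColoringOn G X C) :
    GrundyColoringOn G (insert v X) (C ++ [{v}]) := by
  classical
  rw [grundy_iff] at hC
  obtain ⟨h1, h2, h3, h4, h5⟩ := hC
  set D := C ++ [{v}] with hDdef
  have hlenD : D.length = C.length + 1 := by simp [hDdef]
  have hgetD : ∀ i (hi : i < D.length),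
      D[i]'hi = if h : i < C.length then C[i]'h else {v} := by
    intro i hi
    have hi2 : i < C.length + 1 := by omega
    by_cases h : i < C.length
    · rw [dif_pos h]
      simp only [hDdef]
      exact List.getElem_append_left h
    · rw [dif_neg h]
      simp only [hDdef]
      exact List.getElem_concat_length (l := C) (a := {v}) (i := i) (by omega) (by simpa [hDdef] using hi)
  have hkey : ∀ j (hj : j < C.length), ∃ y ∈ C[j]'hj, G.Adj y v := by
    intro j hj
    by_contra hcon
    push_neg at hcon
    have hjR : ∀ y ∈ C[j]'hj, y ∈ R := by
      intro y hy
      by_contra hyR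
      have hyv : y ≠ v := by
        rintro rfl
        exact hv ((h3 y).mpr ⟨j, hj, hy⟩)
      exact hcon y hy (hcl hyR hvR hyv)
    obtain ⟨α, hα⟩ := h1 j hj
    have hαR : α ∈ R := hjR α hα
    have hαS : α ∉ S := by
      intro hS
      exact hcon α hα ((hvS α hαR).mpr hS).symm
    have hDc : ∀ u ∈ T, u ∉ R ∧ ¬ G.Adj α u ∧
        ∃ j', ∃ hj' : j' < C.length, j' < j ∧ u ∈ C[j']'hj' := by
      intro u huT
      obtain ⟨huX, huR, huS⟩ := hT u huT
      refine ⟨huR, fun h => hαS ((huS α hαR).mp h.symm), ?_⟩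
      obtain ⟨i, hi, hui⟩ := (h3 u).mp huX
      have hij : i ≠ j := by
        rintro rfl
        exact huR (hjR u hui)
      have : ¬ j < i := by
        intro hji
        obtain ⟨y, hy, hadj⟩ := h5 i j hi hj hji u hui
        have hyR := hjR y hy
        have hyS : y ∈ S := (huS y hyR).mp hadj.symm
        exact hcon y hy ((hvS y hyR).mpr hyS).symm
      exact ⟨i, hi, by omega, hui⟩
    have hdomc : ∀ j' (hj' : j' < C.length), j' < j → ∃ y ∈ C[j']'hj', G.Adj y α := by
      intro j' hj' hjj
      exact h5 j j' hj hj' hjj α hα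
    have hfin := count_lemma G R hcl C h2 h4 j hj α hα T R hαR hDc hdomc
      (fun y hy _ => hy)
    omega
  rw [grundy_iff]
  refine ⟨?_, ?_, ?_, ?_, ?_⟩
  · intro i hi
    rw [hgetD i hi]
    by_cases h : i < C.length
    · rw [dif_pos h]; exact h1 i h
    · rw [dif_neg h]; exact ⟨v, Finset.mem_singleton_self v⟩
  · intro i j hi hj hne
    rw [hgetD i hi, hgetD j hj]
    by_cases h : i < C.length <;> by_cases h' : j < C.length
    · rw [dif_pos h, dif_pos h']; exact h2 i j h h' hne
    · rw [dif_pos h, dif_neg h']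
      rw [Finset.disjoint_left]
      intro a ha ha'
      rw [Finset.mem_singleton] at ha'
      subst ha'
      exact hv ((h3 a).mpr ⟨i, h, ha⟩)
    · rw [dif_neg h, dif_pos h']
      rw [Finset.disjoint_left]
      intro a ha ha'
      rw [Finset.mem_singleton] at ha
      subst ha
      exact hv ((h3 a).mpr ⟨j, h', ha'⟩)
    · omega
  · intro x
    rw [Finset.mem_insert]
    constructor
    · rintro (rfl | hx)
      · refine ⟨C.length, by omega, ?_⟩
        rw [hgetD C.length (by omega), dif_neg (by omega)]
        exact Finset.mem_singleton_self x
      · obtain ⟨i, hi, hx⟩ := (h3 x).mp hx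
        refine ⟨i, by omega, ?_⟩
        rw [hgetD i (by omega), dif_pos hi]
        exact hx
    · rintro ⟨i, hi, hx⟩
      rw [hgetD i hi] at hx
      by_cases h : i < C.length
      · rw [dif_pos h] at hx
        exact Or.inr ((h3 x).mpr ⟨i, h, hx⟩)
      · rw [dif_neg h] at hx
        exact Or.inl (Finset.mem_singleton.mp hx)
  · intro i hi x hx w hw
    rw [hgetD i hi] at hx hw
    by_cases h : i < C.length
    · rw [dif_pos h] at hx hw
      exact h4 i h x hx w hw
    · rw [dif_neg h] at hx hw
      rw [Finset.mem_singleton] at hx hw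
      rw [hx, hw]
      exact G.loopless.irrefl v
  · intro i j hi hj hji x hx
    rw [hgetD i hi] at hx
    rw [hgetD j hj]
    have hj' : j < C.length := by
      by_cases h : i < C.length
      · omega
      · omega
    rw [dif_pos hj']
    by_cases h : i < C.length
    · rw [dif_pos h] at hx
      exact h5 i j h hj' hji x hx
    · rw [dif_neg h] at hx
      rw [Finset.mem_singleton] at hx
      subst hx
      exact hkey j hj'

lemma step_lemma (G : SimpleGraph V) (R : Finset V)
    (hcl : ∀ {u w : V}, u ∉ R → w ∉ R → u ≠ w → G.Adj u w)
    (S T F' : Finset V) (x : V) (hx : x ∉ F') (hxR : x ∉ R)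
    (hxS : ∀ ρ ∈ R, (G.Adj x ρ ↔ ρ ∈ S))
    (hT : ∀ u ∈ T, u ∈ F' ∧ u ∉ R ∧ ∀ ρ ∈ R, (G.Adj u ρ ↔ ρ ∈ S))
    (hTcard : R.card ≤ T.card)
    (n : ℕ) (hn : IsGreatest (grundySet G F') n) :
    IsGreatest (grundySet G (insert x F')) (n + 1) := by
  constructor
  · obtain ⟨C, hC, hlen⟩ := hn.1
    refine ⟨C ++ [{x}], ext_lemma G R hcl S T F' x hx hxR hxS hT hTcard C hC, ?_⟩
    simp [hlen]
  · rintro k ⟨C, hC, rfl⟩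
    have hxmem : x ∈ insert x F' := Finset.mem_insert_self x F'
    have herase : (insert x F').erase x = F' := Finset.erase_insert hx
    obtain ⟨C', hC', hle⟩ := del_lemma G R hcl S T (insert x F') x hxmem hxR hxS
      (by rw [herase]; exact hT) hTcard C hC
    rw [herase] at hC'
    have : C'.length ∈ grundySet G F' := ⟨C', hC', rfl⟩
    have := hn.2 this
    omega

theorem stmt10 (G : SimpleGraph V) (R : Finset V) (r : ℕ)
    (hr : R.card = r) (hclique : G.IsClique ↑(Finset.univ \ R)) :
    ∃ W : Finset V, R ⊆ W ∧ W.card ≤ r + r * 2 ^ r ∧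
      ∀ γ γ' : ℕ, IsGreatest (grundySet G Finset.univ) γ →
        IsGreatest (grundySet G W) γ' →
        γ = γ' + (Finset.univ \ W).card := by
  classical
  have hcl : ∀ {u w : V}, u ∉ R → w ∉ R → u ≠ w → G.Adj u w := by
    intro u w hu hw huw
    exact hclique (by simp [hu]) (by simp [hw]) huw
  set grp : Finset V → Finset V :=
    fun S => Finset.univ.filter (fun u => u ∉ R ∧ ∀ ρ ∈ R, (G.Adj u ρ ↔ ρ ∈ S)) with hgrp
  have hchoice : ∀ S : Finset V, ∃ T : Finset V, T ⊆ grp S ∧ T.card = min r (grp S).card :=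
    fun S => Finset.exists_subset_card_eq (min_le_right _ _)
  choose Tf hTf1 hTf2 using hchoice
  set W : Finset V := R ∪ R.powerset.biUnion (fun S => Tf S) with hW
  refine ⟨W, Finset.subset_union_left, ?_, ?_⟩
  · calc W.card ≤ R.card + (R.powerset.biUnion fun S => Tf S).card :=
        Finset.card_union_le _ _
      _ ≤ R.card + ∑ S ∈ R.powerset, (Tf S).card := by
        gcongr
        exact Finset.card_biUnion_le
      _ ≤ r + r * 2 ^ r := by
        rw [hr]
        gcongr
        calc ∑ S ∈ R.powerset, (Tf S).card ≤ ∑ S ∈ R.powerset, r := by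
              apply Finset.sum_le_sum
              intro S _
              rw [hTf2 S]
              exact min_le_left _ _
          _ = 2 ^ r * r := by
              rw [Finset.sum_const, Finset.card_powerset, hr, smul_eq_mul]
          _ = r * 2 ^ r := mul_comm _ _
  · intro γ γ' hγ hγ'
    have key : ∀ m : ℕ, ∀ F : Finset V, W ⊆ F → (F \ W).card = m →
        IsGreatest (grundySet G F) (γ' + m) := by
      intro m
      induction m with
      | zero =>
        intro F hWF h0
        have hFW : F = W := by
          have hempty : F \ W = ∅ := Finset.card_eq_zero.mp h0
          apply Finset.Subset.antisymm _ hWF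
          intro a haF
          by_contra haW
          exact (Finset.eq_empty_iff_forall_notMem.mp hempty a)
            (Finset.mem_sdiff.mpr ⟨haF, haW⟩)
        rw [hFW]
        simpa using hγ'
      | succ m ih =>
        intro F hWF hcard
        have hne : (F \ W).Nonempty := by
          rw [← Finset.card_pos]
          omega
        obtain ⟨x, hx⟩ := hne
        obtain ⟨hxF, hxW⟩ := Finset.mem_sdiff.mp hx
        set F' := F.erase x with hF'
        have hWF' : W ⊆ F' := fun a ha =>
          Finset.mem_erase.mpr ⟨fun h => hxW (h ▸ ha), hWF ha⟩
        have hcard' : (F' \ W).card = m := by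
          have hsd : F' \ W = (F \ W).erase x := by
            ext a
            simp only [hF', Finset.mem_sdiff, Finset.mem_erase]
            tauto
          rw [hsd, Finset.card_erase_of_mem hx]
          omega
        have hx' : x ∉ F' := Finset.notMem_erase x F
        have hxR : x ∉ R := fun h => hxW (Finset.mem_union_left _ h)
        set S := R.filter (fun ρ => G.Adj x ρ) with hS
        have hxS : ∀ ρ ∈ R, (G.Adj x ρ ↔ ρ ∈ S) := by
          intro ρ hρ
          simp [hS, Finset.mem_filter, hρ]
        have hxgrp : x ∈ grp S := by
          rw [hgrp]
          simp only [Finset.mem_filter, Finset.mem_univ, true_and]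
          exact ⟨hxR, hxS⟩
        have hSpow : S ∈ R.powerset := Finset.mem_powerset.mpr (Finset.filter_subset _ _)
        have hTW : Tf S ⊆ W := fun a ha =>
          Finset.mem_union_right _ (Finset.mem_biUnion.mpr ⟨S, hSpow, ha⟩)
        have hTcard : (Tf S).card = r := by
          rcases le_or_gt (grp S).card r with h | h
          · exfalso
            have heq : Tf S = grp S := by
              apply Finset.eq_of_subset_of_card_le (hTf1 S)
              rw [hTf2 S, min_eq_right h]
            exact hxW (hTW (heq ▸ hxgrp))
          · rw [hTf2 S, min_eq_left (by omega)]
        have hTprop : ∀ u ∈ Tf S, u ∈ F' ∧ u ∉ R ∧ ∀ ρ ∈ R, (G.Adj u ρ ↔ ρ ∈ S) := by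
          intro u hu
          have hugrp := hTf1 S hu
          rw [hgrp] at hugrp
          simp only [Finset.mem_filter, Finset.mem_univ, true_and] at hugrp
          exact ⟨hWF' (hTW hu), hugrp.1, hugrp.2⟩
        have hstep := step_lemma G R hcl S (Tf S) F' x hx' hxR hxS hTprop
          (by rw [hTcard, hr]) (γ' + m) (ih F' hWF' hcard')
        have hFx : insert x F' = F := Finset.insert_erase hxF
        rw [hFx] at hstep
        have : γ' + (m + 1) = γ' + m + 1 := by omega
        rw [this]
        exact hstep
    have hkey := key (Finset.univ \ W).card Finset.univ (Finset.subset_univ W) rfl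
    exact hγ.unique hkey
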